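/- Let k ≥ 1, let y₁,…,y_k be nonnegative real numbers with β := ∑_{j=1}^k y_j^{k−1} > 0, and set p_i := y_i^{k−1} / β for each i. Then p_i ≥ 0, ∑_{i=1}^k p_i = 1, and for every l ∈ {1,…,k}: (1 − p_l) · y_l ≤ (1 − 1/k) · ∑_{i=1}^k p_i y_i. -/

import Mathlib

/-- Weighted AM-GM / Young inequality: `(m+1) a^m b ≤ m a^(m+1) + b^(m+1)`. -/
lemma young_aux (m : ℕ) (a b : ℝ) (ha : 0 ≤ a) (hb : 0 ≤ b) :
    ((m : ℝ) + 1) * (a ^ m * b) ≤ (m : ℝ) * a ^ (m + 1) + b ^ (m + 1) := by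
  induction m with
  | zero => simp
  | succ n ih =>
    have h1 := mul_le_mul_of_nonneg_left ih ha
    have h2 : 0 ≤ (a - b) * (a ^ (n + 1) - b ^ (n + 1)) := by
      rcases le_total a b with h | h
      · have := pow_le_pow_left₀ ha h (n + 1)
        nlinarith
      · have := pow_le_pow_left₀ hb h (n + 1)
        nlinarith
    push_cast
    simp only [pow_succ] at h1 h2 ⊢
    nlinarith [h1, h2]

/-- Let `k ≥ 1`, `y₁,…,y_k ≥ 0` with `β := ∑_j y_j^{k−1} > 0`, and set
`p_i := y_i^{k−1} / β`. Then `p_i ≥ 0`, `∑_i p_i = 1`, and for every `l`: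
`(1 − p_l) · y_l ≤ (1 − 1/k) · ∑_i p_i y_i`. -/
theorem power_distribution_feasible
    (k : ℕ) (hk : 1 ≤ k) (y : Fin k → ℝ) (hy : ∀ i, 0 ≤ y i)
    (hβ : 0 < ∑ j, (y j) ^ (k - 1)) :
    (∀ i, 0 ≤ (y i) ^ (k - 1) / ∑ j, (y j) ^ (k - 1)) ∧
    (∑ i, (y i) ^ (k - 1) / ∑ j, (y j) ^ (k - 1)) = 1 ∧
    ∀ l, (1 - (y l) ^ (k - 1) / ∑ j, (y j) ^ (k - 1)) * y l ≤
      (1 - 1 / (k : ℝ)) * ∑ i, ((y i) ^ (k - 1) / ∑ j, (y j) ^ (k - 1)) * y i := by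
  obtain ⟨m, rfl⟩ : ∃ m, k = m + 1 := ⟨k - 1, (Nat.succ_pred_eq_of_pos hk).symm⟩
  simp only [Nat.add_sub_cancel] at *
  set β := ∑ j, (y j) ^ m with hβdef
  have hβ' : β ≠ 0 := hβ.ne'
  refine ⟨fun i => div_nonneg (pow_nonneg (hy i) m) hβ.le, ?_, ?_⟩
  · rw [← Finset.sum_div, div_self hβ']
  · intro l
    have hm1 : (0:ℝ) < (m : ℝ) + 1 := by positivity
    have hS : ∑ i, ((y i) ^ m / β) * y i = (∑ i, (y i) ^ (m + 1)) / β := by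
      rw [Finset.sum_div]
      refine Finset.sum_congr rfl fun i _ => by
        rw [div_mul_eq_mul_div, ← pow_succ]
    rw [hS]
    -- sum the Young inequalities
    have H : ((m : ℝ) + 1) * (β * y l) ≤
        (m : ℝ) * (∑ i, (y i) ^ (m + 1)) + ((m : ℝ) + 1) * (y l) ^ (m + 1) := by
      have := Finset.sum_le_sum
        (fun i (_ : i ∈ Finset.univ) => young_aux m (y i) (y l) (hy i) (hy l))
      simp only [Finset.sum_add_distrib, ← Finset.mul_sum, ← Finset.sum_mul] at this
      simp only [Finset.sum_const, Finset.card_univ, Fintype.card_fin, nsmul_eq_mul] at this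
      rw [hβdef]
      push_cast at this ⊢
      linarith [this]
    have hLHS : (1 - (y l) ^ m / β) * y l = (β * y l - (y l) ^ (m + 1)) / β := by
      field_simp
      ring
    rw [hLHS]
    have hcoef : (1 - 1 / ((m : ℝ) + 1)) = (m : ℝ) / ((m : ℝ) + 1) := by
      field_simp
      ring
    have hgoal : β * y l - (y l) ^ (m + 1) ≤
        (1 - 1 / (((m : ℕ) + 1 : ℕ) : ℝ)) * (∑ i, (y i) ^ (m + 1)) := by
      push_cast
      rw [hcoef, div_mul_eq_mul_div, le_div_iff₀ hm1]
      nlinarith [H]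
    calc (β * y l - (y l) ^ (m + 1)) / β
        ≤ ((1 - 1 / (((m : ℕ) + 1 : ℕ) : ℝ)) * (∑ i, (y i) ^ (m + 1))) / β := by
          gcongr
      _ = (1 - 1 / (((m : ℕ) + 1 : ℕ) : ℝ)) * ((∑ i, (y i) ^ (m + 1)) / β) := by
          rw [mul_div_assoc]
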